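/- Let μ_n = (q_n,s_n), for n = 1,2,..., and μ = (q,s) be IC, IR, and NPT Γ-mechanisms with extended buyer payoff functions b_n and b respectively, such that b_n converges pointwise to b on ℝ^k and μ is seller favorable. Then for every random valuation X with values in ℝ_+^k and finite expectation, limsup_{n→∞} E[s_n(X)] ≤ E[s(X)]. -/

import Mathlib

open MeasureTheory Filter

noncomputable section

abbrev E (k : ℕ) := EuclideanSpace ℝ (Fin k)

def orthant (k : ℕ) : Set (E k) := {x | ∀ i, 0 ≤ x i}

/-- The dot product `g · x` on `ℝ^k`. -/
def dotp {k : ℕ} (g x : E k) : ℝ := ∑ i, g i * x i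

def IsAlloc {k : ℕ} (Γ : Set (E k)) (q : E k → E k) : Prop :=
  ∀ x ∈ orthant k, q x ∈ Γ

def IsIC {k : ℕ} (q : E k → E k) (s : E k → ℝ) : Prop :=
  ∀ x ∈ orthant k, ∀ y ∈ orthant k, dotp (q x) x - s x ≥ dotp (q y) x - s y

def IsIR {k : ℕ} (q : E k → E k) (s : E k → ℝ) : Prop :=
  ∀ x ∈ orthant k, 0 ≤ dotp (q x) x - s x

def IsNPT {k : ℕ} (s : E k → ℝ) : Prop :=
  ∀ x ∈ orthant k, 0 ≤ s x

/-- The set of subgradients of `f` at `x`. -/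
def Subgrad {k : ℕ} (f : E k → ℝ) (x : E k) : Set (E k) :=
  {g | ∀ y, f y - f x ≥ dotp g (y - x)}

/-- `b ∈ B_Γ`: convex on `ℝ^k`, `b 0 = 0`, and a subgradient in `Γ` at every point. -/
def BClass {k : ℕ} (Γ : Set (E k)) (b : E k → ℝ) : Prop :=
  ConvexOn ℝ Set.univ b ∧ b 0 = 0 ∧ ∀ x, (Subgrad b x ∩ Γ).Nonempty

/-- One-sided directional derivative `f′(x;y) = lim_{δ→0⁺} (f(x+δy)-f(x))/δ`. -/
def dirDeriv {k : ℕ} (b : E k → ℝ) (x y : E k) : ℝ :=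
  limUnder (nhdsWithin (0:ℝ) (Set.Ioi 0)) fun δ => (b (x + δ • y) - b x) / δ

/-- The extended buyer payoff function `b(x) = sup_{z ∈ ℝ₊^k} [q(z)·x − s(z)]`. -/
def extPayoff {k : ℕ} (q : E k → E k) (s : E k → ℝ) (x : E k) : ℝ :=
  sSup ((fun z => dotp (q z) x - s z) '' orthant k)

def SellerFavorable {k : ℕ} (q : E k → E k) (s : E k → ℝ) : Prop :=
  ∀ x ∈ orthant k, s x = dirDeriv (extPayoff q s) x x - extPayoff q s x

lemma dotp_eq_inner {k : ℕ} (g x : E k) : dotp g x = @inner ℝ _ _ g x := by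
  simp [dotp, PiLp.inner_apply, RCLike.inner_apply, conj_trivial]
  exact Finset.sum_congr rfl fun i _ => mul_comm _ _

lemma abs_dotp_le {k : ℕ} (g x : E k) : |dotp g x| ≤ ‖g‖ * ‖x‖ := by
  rw [dotp_eq_inner]; exact abs_real_inner_le_norm g x

lemma dotp_smul {k : ℕ} (g : E k) (c : ℝ) (x : E k) : dotp g (c • x) = c * dotp g x := by
  simp only [dotp, PiLp.smul_apply, smul_eq_mul, Finset.mul_sum]
  exact Finset.sum_congr rfl fun i _ => by ring

lemma dotp_add {k : ℕ} (g u v : E k) : dotp g (u + v) = dotp g u + dotp g v := by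
  simp only [dotp, PiLp.add_apply, mul_add, Finset.sum_add_distrib]

lemma dotp_sub {k : ℕ} (g x y : E k) : dotp g x - dotp g y = dotp g (x - y) := by
  simp only [dotp, PiLp.sub_apply, mul_sub, Finset.sum_sub_distrib]

lemma zero_mem_orthant {k : ℕ} : (0 : E k) ∈ orthant k := fun i => by simp

section Mech
variable {k : ℕ} {Γ : Set (E k)} {C : ℝ} {q : E k → E k} {s : E k → ℝ}







lemma s_zero (hIR : IsIR q s) (hNPT : IsNPT s) : s 0 = 0 := by
  have h1 := hIR 0 zero_mem_orthant
  have h2 := hNPT 0 zero_mem_orthant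
  have h0 : dotp (q 0) (0 : E k) = 0 := by simp [dotp]
  rw [h0] at h1; linarith

lemma payoff_set_nonempty (x : E k) : ((fun z => dotp (q z) x - s z) '' orthant k).Nonempty :=
  ⟨_, ⟨0, zero_mem_orthant, rfl⟩⟩

lemma payoff_bddAbove (hC : ∀ g ∈ Γ, ‖g‖ ≤ C) (hq : IsAlloc Γ q) (hNPT : IsNPT s) (x : E k) :
    BddAbove ((fun z => dotp (q z) x - s z) '' orthant k) := by
  refine ⟨C * ‖x‖, ?_⟩
  rintro _ ⟨z, hz, rfl⟩
  have h1 : dotp (q z) x ≤ ‖q z‖ * ‖x‖ := le_trans (le_abs_self _) (abs_dotp_le _ _)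
  have h2 : ‖q z‖ ≤ C := hC _ (hq z hz)
  have h3 := hNPT z hz
  have h4 := norm_nonneg x
  simp only
  nlinarith

lemma le_extPayoff (hC : ∀ g ∈ Γ, ‖g‖ ≤ C) (hq : IsAlloc Γ q) (hNPT : IsNPT s)
    {w : E k} (hw : w ∈ orthant k) (x : E k) :
    dotp (q w) x - s w ≤ extPayoff q s x :=
  le_csSup (payoff_bddAbove hC hq hNPT x) ⟨w, hw, rfl⟩

lemma extPayoff_eq (hC : ∀ g ∈ Γ, ‖g‖ ≤ C) (hq : IsAlloc Γ q) (hIC : IsIC q s) (hNPT : IsNPT s)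
    {x : E k} (hx : x ∈ orthant k) :
    extPayoff q s x = dotp (q x) x - s x := by
  refine le_antisymm ?_ (le_extPayoff hC hq hNPT hx x)
  refine csSup_le (payoff_set_nonempty x) ?_
  rintro _ ⟨z, hz, rfl⟩
  exact hIC x hx z hz

lemma extPayoff_le (hC : ∀ g ∈ Γ, ‖g‖ ≤ C) (hq : IsAlloc Γ q) (hNPT : IsNPT s) (x : E k) :
    extPayoff q s x ≤ C * ‖x‖ := by
  refine csSup_le (payoff_set_nonempty x) ?_
  rintro _ ⟨z, hz, rfl⟩
  have h1 : dotp (q z) x ≤ ‖q z‖ * ‖x‖ := le_trans (le_abs_self _) (abs_dotp_le _ _)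
  have h2 : ‖q z‖ ≤ C := hC _ (hq z hz)
  have h3 := hNPT z hz
  have h4 := norm_nonneg x
  simp only
  nlinarith

lemma abs_extPayoff_le (hC : ∀ g ∈ Γ, ‖g‖ ≤ C) (hq : IsAlloc Γ q) (hIR : IsIR q s)
    (hNPT : IsNPT s) (x : E k) : |extPayoff q s x| ≤ C * ‖x‖ := by
  rw [abs_le]
  constructor
  · have h1 := le_extPayoff hC hq hNPT zero_mem_orthant x
    rw [s_zero hIR hNPT] at h1
    have h2 : -(‖q 0‖ * ‖x‖) ≤ dotp (q (0 : E k)) x := neg_le_of_abs_le (abs_dotp_le _ _)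
    have h3 : ‖q (0 : E k)‖ ≤ C := hC _ (hq 0 zero_mem_orthant)
    have h4 := norm_nonneg x
    nlinarith
  · exact extPayoff_le hC hq hNPT x

lemma extPayoff_lip (hC : ∀ g ∈ Γ, ‖g‖ ≤ C) (hq : IsAlloc Γ q) (hNPT : IsNPT s) (x y : E k) :
    extPayoff q s x ≤ extPayoff q s y + C * ‖x - y‖ := by
  refine csSup_le (payoff_set_nonempty x) ?_
  rintro _ ⟨z, hz, rfl⟩
  have h1 : dotp (q z) x - s z = (dotp (q z) y - s z) + dotp (q z) (x - y) := by
    rw [← dotp_sub]; ring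
  have h2 := le_extPayoff hC hq hNPT hz y
  have h3 : dotp (q z) (x - y) ≤ ‖q z‖ * ‖x - y‖ := le_trans (le_abs_self _) (abs_dotp_le _ _)
  have h4 : ‖q z‖ ≤ C := hC _ (hq z hz)
  have h5 := norm_nonneg (x - y)
  simp only
  nlinarith

lemma extPayoff_cont (hC : ∀ g ∈ Γ, ‖g‖ ≤ C) (hq : IsAlloc Γ q) (hNPT : IsNPT s) (hC0 : 0 ≤ C) :
    Continuous (extPayoff q s) := by
  have : LipschitzWith C.toNNReal (extPayoff q s) := by
    refine LipschitzWith.of_dist_le_mul fun x y => ?_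
    rw [Real.dist_eq, dist_eq_norm, Real.coe_toNNReal _ hC0, abs_sub_le_iff]
    constructor
    · linarith [extPayoff_lip hC hq hNPT x y]
    · have := extPayoff_lip hC hq hNPT y x
      rw [norm_sub_rev] at this
      linarith
  exact this.continuous

lemma extPayoff_convex (hC : ∀ g ∈ Γ, ‖g‖ ≤ C) (hq : IsAlloc Γ q) (hNPT : IsNPT s) :
    ConvexOn ℝ Set.univ (extPayoff q s) := by
  refine ⟨convex_univ, fun x _ y _ a c ha hc hac => ?_⟩
  refine csSup_le (payoff_set_nonempty _) ?_
  rintro _ ⟨z, hz, rfl⟩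
  have e : dotp (q z) (a • x + c • y) - s z
      = a * (dotp (q z) x - s z) + c * (dotp (q z) y - s z) := by
    rw [dotp_add, dotp_smul, dotp_smul]
    linear_combination (s z) * hac
  simp only [smul_eq_mul]
  rw [e]
  have h1 := mul_le_mul_of_nonneg_left (le_extPayoff hC hq hNPT hz x) ha
  have h2 := mul_le_mul_of_nonneg_left (le_extPayoff hC hq hNPT hz y) hc
  linarith

lemma key_ineq (hC : ∀ g ∈ Γ, ‖g‖ ≤ C) (hq : IsAlloc Γ q) (hIC : IsIC q s) (hNPT : IsNPT s)
    {x : E k} (hx : x ∈ orthant k) {δ : ℝ} (hδ : 0 < δ) :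
    s x ≤ (extPayoff q s ((1 + δ) • x) - (1 + δ) * extPayoff q s x) / δ := by
  have h1 : dotp (q x) ((1 + δ) • x) - s x ≤ extPayoff q s ((1 + δ) • x) :=
    le_extPayoff hC hq hNPT hx _
  rw [dotp_smul] at h1
  have h2 : (1 + δ) * extPayoff q s x = (1 + δ) * dotp (q x) x - (1 + δ) * s x := by
    rw [extPayoff_eq hC hq hIC hNPT hx]; ring
  rw [le_div_iff₀ hδ]
  linarith

lemma s_le_bound (hC : ∀ g ∈ Γ, ‖g‖ ≤ C) (hq : IsAlloc Γ q) (hIC : IsIC q s) (hIR : IsIR q s)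
    (hNPT : IsNPT s) {x : E k} (hx : x ∈ orthant k) : s x ≤ C * ‖x‖ := by
  have h1 := hIR x hx
  have h2 : dotp (q x) x ≤ ‖q x‖ * ‖x‖ := le_trans (le_abs_self _) (abs_dotp_le _ _)
  have h3 : ‖q x‖ ≤ C := hC _ (hq x hx)
  have h4 := norm_nonneg x
  nlinarith

end Mech

section Slope
variable {k : ℕ}

lemma ray_convex {b : E k → ℝ} (hb : ConvexOn ℝ Set.univ b) (x : E k) :
    ConvexOn ℝ Set.univ (fun t : ℝ => b (x + t • x)) := by
  refine ⟨convex_univ, fun t1 _ t2 _ a c ha hc hac => ?_⟩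
  have e : x + (a * t1 + c * t2) • x = a • (x + t1 • x) + c • (x + t2 • x) := by
    have h : a • (x + t1 • x) + c • (x + t2 • x) = (a + c) • x + (a * t1 + c * t2) • x := by
      match_scalars <;> ring
    rw [h, hac, one_smul]
  have := hb.2 (Set.mem_univ (x + t1 • x)) (Set.mem_univ (x + t2 • x)) ha hc hac
  simpa [smul_eq_mul, e] using this

lemma slope_monotoneOn {b : E k → ℝ} (hb : ConvexOn ℝ Set.univ b) (x : E k) :
    MonotoneOn (fun δ : ℝ => (b (x + δ • x) - b x) / δ) (Set.Ioi 0) := by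
  intro d1 h1 d2 h2 h12
  have := (ray_convex hb x).secant_mono (a := 0) (Set.mem_univ 0) (Set.mem_univ d1)
    (Set.mem_univ d2) (ne_of_gt (Set.mem_Ioi.1 h1)) (ne_of_gt (Set.mem_Ioi.1 h2)) h12
  simpa using this

lemma slope_lb {b : E k → ℝ} (hb : ConvexOn ℝ Set.univ b) (x : E k) {δ : ℝ} (hδ : 0 < δ) :
    b x - b 0 ≤ (b (x + δ • x) - b x) / δ := by
  have h := (ray_convex hb x).secant_mono (a := 0) (Set.mem_univ 0) (Set.mem_univ (-1 : ℝ))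
    (Set.mem_univ δ) (by norm_num) (ne_of_gt hδ) (by linarith)
  simp only [zero_smul, add_zero, sub_zero, neg_one_smul] at h
  have h0 : x + -x = (0 : E k) := by abel
  rw [h0] at h
  have h1 : (b 0 - b x) / (-1 : ℝ) = b x - b 0 := by ring
  linarith [h, h1.symm.le, h1.le]

lemma slope_bddBelow {b : E k → ℝ} (hb : ConvexOn ℝ Set.univ b) (x : E k) :
    BddBelow ((fun δ : ℝ => (b (x + δ • x) - b x) / δ) '' Set.Ioi 0) := by
  refine ⟨b x - b 0, ?_⟩
  rintro _ ⟨δ, hδ, rfl⟩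
  exact slope_lb hb x (Set.mem_Ioi.1 hδ)

lemma slope_tendsto {b : E k → ℝ} (hb : ConvexOn ℝ Set.univ b) (x : E k) :
    Tendsto (fun δ : ℝ => (b (x + δ • x) - b x) / δ) (nhdsWithin 0 (Set.Ioi 0))
      (nhds (sInf ((fun δ : ℝ => (b (x + δ • x) - b x) / δ) '' Set.Ioi 0))) :=
  MonotoneOn.tendsto_nhdsGT (slope_monotoneOn hb x) (slope_bddBelow hb x)

end Slope



def Gfun {k : ℕ} (b : E k → ℝ) (δ : ℝ) (x : E k) : ℝ := (b ((1 + δ) • x) - (1 + δ) * b x) / δ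

section Gsec
variable {k : ℕ} {b : E k → ℝ} {C : ℝ}

lemma Gfun_cont (hb : Continuous b) (δ : ℝ) : Continuous (Gfun b δ) :=
  (((hb.comp (continuous_const_smul (1 + δ))).sub (continuous_const.mul hb)).div_const δ)

lemma Gfun_abs (habs : ∀ x, |b x| ≤ C * ‖x‖) {δ : ℝ} (hδ : 0 < δ) (x : E k) :
    |Gfun b δ x| ≤ (2 * C * (1 + δ) / δ) * ‖x‖ := by
  have h1δ : (0:ℝ) < 1 + δ := by linarith
  have h1 := habs ((1 + δ) • x)
  rw [norm_smul, Real.norm_eq_abs, abs_of_pos h1δ] at h1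
  have h2 := habs x
  have h3 : |b ((1 + δ) • x) - (1 + δ) * b x| ≤ |b ((1 + δ) • x)| + |(1 + δ) * b x| :=
    abs_sub _ _
  rw [abs_mul, abs_of_pos h1δ] at h3
  have h4 : |b ((1 + δ) • x) - (1 + δ) * b x| ≤ 2 * C * (1 + δ) * ‖x‖ := by nlinarith
  have h5 : |Gfun b δ x| = |b ((1 + δ) • x) - (1 + δ) * b x| / δ := by
    rw [Gfun, abs_div, abs_of_pos hδ]
  rw [h5]
  calc |b ((1 + δ) • x) - (1 + δ) * b x| / δ ≤ (2 * C * (1 + δ) * ‖x‖) / δ := by gcongr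
    _ = (2 * C * (1 + δ) / δ) * ‖x‖ := by ring

lemma Gfun_eq {δ : ℝ} (h0 : δ ≠ 0) (x : E k) :
    Gfun b δ x = (b (x + δ • x) - b x) / δ - b x := by
  have e : (1 + δ) • x = x + δ • x := by match_scalars; ring
  rw [Gfun, e]
  field_simp
  ring

lemma Gfun_tendsto (hb : ConvexOn ℝ Set.univ b) (x : E k) :
    Tendsto (fun m : ℕ => Gfun b (1 / (m + 1)) x) atTop (nhds (dirDeriv b x x - b x)) := by
  have hT := slope_tendsto hb x
  have hdd : dirDeriv b x x = sInf ((fun δ : ℝ => (b (x + δ • x) - b x) / δ) '' Set.Ioi 0) :=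
    hT.limUnder_eq
  have hδm : Tendsto (fun m : ℕ => (1:ℝ) / (m + 1)) atTop (nhdsWithin 0 (Set.Ioi 0)) := by
    apply tendsto_nhdsWithin_of_tendsto_nhds_of_eventually_within
    · exact tendsto_one_div_add_atTop_nhds_zero_nat
    · exact Eventually.of_forall fun m => Set.mem_Ioi.2 (by positivity)
  have hTm := (hT.comp hδm).sub_const (b x)
  rw [← hdd] at hTm
  refine Tendsto.congr (fun m => ?_) hTm
  exact (Gfun_eq (by positivity) x).symm

lemma Gfun_le_one (hb : ConvexOn ℝ Set.univ b) (x : E k) {δ : ℝ} (hδ : 0 < δ) (hδ1 : δ ≤ 1) :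
    Gfun b δ x ≤ Gfun b 1 x := by
  rw [Gfun_eq (ne_of_gt hδ) x, Gfun_eq one_ne_zero x]
  have := slope_monotoneOn hb x (Set.mem_Ioi.2 hδ) (Set.mem_Ioi.2 one_pos) hδ1
  simp only at this
  linarith

lemma Gfun_one_le (habs : ∀ x, |b x| ≤ C * ‖x‖) (x : E k) :
    Gfun b 1 x ≤ 4 * C * ‖x‖ := by
  have h1 := habs ((2 : ℝ) • x)
  rw [norm_smul, Real.norm_eq_abs] at h1
  norm_num at h1
  have h2 := habs x
  have e : Gfun b 1 x = b ((2 : ℝ) • x) - 2 * b x := by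
    rw [Gfun]; norm_num
  rw [e]
  have l1 : b ((2 : ℝ) • x) ≤ C * (2 * ‖x‖) := le_trans (le_abs_self _) h1
  have l2 : -(C * ‖x‖) ≤ b x := neg_le_of_abs_le h2
  nlinarith

end Gsec




/-- under the hypotheses of Statement 6, for every integrable random
valuation `X`, `limsup E[sₙ(X)] ≤ E[s(X)]`. -/
theorem stmt7 {k : ℕ} (hk : 1 ≤ k) (Γ : Set (E k)) (hΓne : Γ.Nonempty)
    (hΓc : IsCompact Γ) (hΓ : Γ ⊆ orthant k)
    (qn : ℕ → E k → E k) (sn : ℕ → E k → ℝ)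
    (hqn : ∀ n, IsAlloc Γ (qn n)) (hICn : ∀ n, IsIC (qn n) (sn n))
    (hIRn : ∀ n, IsIR (qn n) (sn n)) (hNPTn : ∀ n, IsNPT (sn n))
    (q : E k → E k) (s : E k → ℝ)
    (hq : IsAlloc Γ q) (hIC : IsIC q s) (hIR : IsIR q s) (hNPT : IsNPT s)
    (hconv : ∀ x : E k,
      Tendsto (fun n => extPayoff (qn n) (sn n) x) atTop (nhds (extPayoff q s x)))
    (hSF : SellerFavorable q s)
    {Ω : Type*} [MeasurableSpace Ω] (P : Measure Ω) [IsProbabilityMeasure P]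
    (X : Ω → E k) (hXm : Measurable X) (hXpos : ∀ ω, X ω ∈ orthant k)
    (hXint : Integrable (fun ω => ‖X ω‖) P) :
    limsup (fun n => ∫ ω, sn n (X ω) ∂P) atTop ≤ ∫ ω, s (X ω) ∂P := by
  obtain ⟨C, hC⟩ := isBounded_iff_forall_norm_le.1 hΓc.isBounded
  obtain ⟨g0, hg0⟩ := hΓne
  have hC0 : (0:ℝ) ≤ C := le_trans (norm_nonneg g0) (hC g0 hg0)
  have hconvb : ConvexOn ℝ Set.univ (extPayoff q s) := extPayoff_convex hC hq hNPT
  have hcontb : Continuous (extPayoff q s) := extPayoff_cont hC hq hNPT hC0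
  have hcontbn : ∀ n, Continuous (extPayoff (qn n) (sn n)) :=
    fun n => extPayoff_cont hC (hqn n) (hNPTn n) hC0
  have habsb : ∀ x, |extPayoff q s x| ≤ C * ‖x‖ := abs_extPayoff_le hC hq hIR hNPT
  have habsbn : ∀ n x, |extPayoff (qn n) (sn n) x| ≤ C * ‖x‖ :=
    fun n => abs_extPayoff_le hC (hqn n) (hIRn n) (hNPTn n)
  have keyn : ∀ (n : ℕ) (ω : Ω) {δ : ℝ}, 0 < δ →
      sn n (X ω) ≤ Gfun (extPayoff (qn n) (sn n)) δ (X ω) :=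
    fun n ω {δ} hδ => by
      simpa [Gfun] using key_ineq hC (hqn n) (hICn n) (hNPTn n) (hXpos ω) hδ
  have stepA : ∀ δ : ℝ, 0 < δ →
      limsup (fun n => ∫ ω, sn n (X ω) ∂P) atTop ≤ ∫ ω, Gfun (extPayoff q s) δ (X ω) ∂P := by
    intro δ hδ
    have hGnmeas : ∀ n, AEStronglyMeasurable
        (fun ω => Gfun (extPayoff (qn n) (sn n)) δ (X ω)) P :=
      fun n => (((Gfun_cont (hcontbn n) δ).measurable).comp hXm).aestronglyMeasurable
    have hbint : Integrable (fun ω => (2 * C * (1 + δ) / δ) * ‖X ω‖) P := hXint.const_mul _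
    have hbound : ∀ n, ∀ᵐ ω ∂P, ‖Gfun (extPayoff (qn n) (sn n)) δ (X ω)‖
        ≤ (2 * C * (1 + δ) / δ) * ‖X ω‖ :=
      fun n => Eventually.of_forall fun ω => by
        rw [Real.norm_eq_abs]; exact Gfun_abs (habsbn n) hδ (X ω)
    have hlim : ∀ᵐ ω ∂P, Tendsto (fun n => Gfun (extPayoff (qn n) (sn n)) δ (X ω)) atTop
        (nhds (Gfun (extPayoff q s) δ (X ω))) :=
      Eventually.of_forall fun ω => by
        simpa [Gfun] using (((hconv _).sub ((hconv _).const_mul (1 + δ))).div_const δ)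
    have hDC := tendsto_integral_of_dominated_convergence _ hGnmeas hbint hbound hlim
    have hle : ∀ n, ∫ ω, sn n (X ω) ∂P ≤ ∫ ω, Gfun (extPayoff (qn n) (sn n)) δ (X ω) ∂P := by
      intro n
      have hpt : ∀ ω, sn n (X ω) ≤ Gfun (extPayoff (qn n) (sn n)) δ (X ω) :=
        fun ω => keyn n ω hδ
      by_cases hm : AEStronglyMeasurable (fun ω => sn n (X ω)) P
      · have hsint : Integrable (fun ω => sn n (X ω)) P := by
          refine Integrable.mono' (hXint.const_mul C) hm (Eventually.of_forall fun ω => ?_)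
          rw [Real.norm_eq_abs, abs_of_nonneg (hNPTn n _ (hXpos ω))]
          exact s_le_bound hC (hqn n) (hICn n) (hIRn n) (hNPTn n) (hXpos ω)
        exact integral_mono hsint (Integrable.mono' hbint (hGnmeas n) (hbound n)) hpt
      · rw [integral_undef (fun h => hm h.1)]
        exact integral_nonneg fun ω => le_trans (hNPTn n _ (hXpos ω)) (hpt ω)
    have hcb : IsCoboundedUnder (· ≤ ·) atTop (fun n => ∫ ω, sn n (X ω) ∂P) :=
      isCoboundedUnder_le_of_le atTop (x := 0)
        fun n => integral_nonneg fun ω => hNPTn n _ (hXpos ω)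
    calc limsup (fun n => ∫ ω, sn n (X ω) ∂P) atTop
        ≤ limsup (fun n => ∫ ω, Gfun (extPayoff (qn n) (sn n)) δ (X ω) ∂P) atTop :=
          limsup_le_limsup (Eventually.of_forall hle) hcb hDC.isBoundedUnder_le
      _ = _ := hDC.limsup_eq
  have hkey : ∀ (ω : Ω) {δ : ℝ}, 0 < δ → s (X ω) ≤ Gfun (extPayoff q s) δ (X ω) :=
    fun ω {δ} hδ => by simpa [Gfun] using key_ineq hC hq hIC hNPT (hXpos ω) hδ
  have hGmmeas : ∀ m : ℕ, AEStronglyMeasurable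
      (fun ω => Gfun (extPayoff q s) (1 / (m + 1)) (X ω)) P :=
    fun m => (((Gfun_cont hcontb _).measurable).comp hXm).aestronglyMeasurable
  have hbint4 : Integrable (fun ω => (4 * C) * ‖X ω‖) P := hXint.const_mul _
  have hbound4 : ∀ m : ℕ, ∀ᵐ ω ∂P,
      ‖Gfun (extPayoff q s) (1 / (m + 1)) (X ω)‖ ≤ (4 * C) * ‖X ω‖ := by
    intro m
    refine Eventually.of_forall fun ω => ?_
    have hm0 : (0:ℝ) < 1 / (m + 1) := by positivity
    have hge := hkey ω hm0
    have hs0 : 0 ≤ s (X ω) := hNPT _ (hXpos ω)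
    have hm1 : (1:ℝ) / (m + 1) ≤ 1 := by
      rw [div_le_one (by positivity)]
      linarith [Nat.cast_nonneg (α := ℝ) m]
    have hle1 : Gfun (extPayoff q s) (1 / (m + 1)) (X ω) ≤ Gfun (extPayoff q s) 1 (X ω) :=
      Gfun_le_one hconvb _ hm0 hm1
    have h4 := Gfun_one_le habsb (X ω)
    rw [Real.norm_eq_abs, abs_of_nonneg (le_trans hs0 hge)]
    linarith
  have hlimB : ∀ᵐ ω ∂P, Tendsto (fun m : ℕ => Gfun (extPayoff q s) (1 / (m + 1)) (X ω)) atTop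
      (nhds (s (X ω))) := by
    refine Eventually.of_forall fun ω => ?_
    have h := Gfun_tendsto hconvb (X ω)
    rw [← hSF _ (hXpos ω)] at h
    exact h
  have hB := tendsto_integral_of_dominated_convergence _ hGmmeas hbint4 hbound4 hlimB
  exact ge_of_tendsto' hB fun m => stepA _ (by positivity)
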